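/- Gao's quantum union bound (corollary): let ρ be a density matrix on ℂ^d and let P₁, ..., P_L be orthogonal projection matrices on ℂ^d. Then 1 − Tr(P_L P_{L-1} ⋯ P₁ ρ P₁ ⋯ P_{L-1} P_L) ≤ 4 · ∑_{i=1}^{L} Tr((I − P_i) ρ). -/

import Mathlib

open scoped ComplexOrder
open Matrix

/-- `descM P k = P k * P (k-1) * ⋯ * P 1`, empty product is the identity matrix. -/
noncomputable def descM {d : ℕ} (P : ℕ → Matrix (Fin d) (Fin d) ℂ) : ℕ → Matrix (Fin d) (Fin d) ℂ
  | 0 => 1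
  | k + 1 => P (k + 1) * descM P k

/-- `ascM P k = P 1 * P 2 * ⋯ * P k`, empty product is the identity matrix. -/
noncomputable def ascM {d : ℕ} (P : ℕ → Matrix (Fin d) (Fin d) ℂ) : ℕ → Matrix (Fin d) (Fin d) ℂ
  | 0 => 1
  | k + 1 => ascM P k * P (k + 1)

lemma gao_trace_eq {d : ℕ} (M : Matrix (Fin d) (Fin d) ℂ) :
    (Mᴴ * M).trace = ((∑ i, ∑ j, Complex.normSq (M j i) : ℝ) : ℂ) := by
  push_cast
  simp [Matrix.trace, Matrix.diag, Matrix.mul_apply, Matrix.conjTranspose_apply,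
    ← Complex.normSq_eq_conj_mul_self]

lemma gao_re_nonneg {d : ℕ} (M : Matrix (Fin d) (Fin d) ℂ) :
    0 ≤ ((Mᴴ * M).trace).re := by
  rw [gao_trace_eq]
  simp only [Complex.ofReal_re]
  exact Finset.sum_nonneg fun i _ => Finset.sum_nonneg fun j _ => Complex.normSq_nonneg _

lemma gao_re_swap {d : ℕ} (A B : Matrix (Fin d) (Fin d) ℂ) :
    ((Bᴴ * A).trace).re = ((Aᴴ * B).trace).re := by
  have h : Bᴴ * A = (Aᴴ * B)ᴴ := by simp [Matrix.conjTranspose_mul]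
  rw [h, Matrix.trace_conjTranspose]
  simp

lemma gao_cs4 {d : ℕ} (A B : Matrix (Fin d) (Fin d) ℂ) :
    ((Aᴴ * B).trace).re ≤ ((Aᴴ * A).trace).re + ((Bᴴ * B).trace).re / 4 := by
  have h0 := gao_re_nonneg (A - ((1/2 : ℝ) : ℂ) • B)
  have hexp : (A - ((1/2 : ℝ) : ℂ) • B)ᴴ * (A - ((1/2 : ℝ) : ℂ) • B)
      = Aᴴ * A - ((1/2 : ℝ) : ℂ) • (Aᴴ * B) - ((1/2 : ℝ) : ℂ) • (Bᴴ * A)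
        + ((1/4 : ℝ) : ℂ) • (Bᴴ * B) := by
    simp only [Matrix.conjTranspose_sub, Matrix.conjTranspose_smul, Matrix.sub_mul,
      Matrix.mul_sub, Matrix.smul_mul, Matrix.mul_smul, smul_sub, smul_smul, Complex.star_def,
      Complex.conj_ofReal]
    rw [← Complex.ofReal_mul]
    norm_num
    abel
  rw [hexp] at h0
  simp only [Matrix.trace_add, Matrix.trace_sub, Matrix.trace_smul, smul_eq_mul,
    Complex.add_re, Complex.sub_re, Complex.re_ofReal_mul] at h0
  have hswap := gao_re_swap A B
  linarith

theorem stmt6 {d : ℕ} (ρ : Matrix (Fin d) (Fin d) ℂ)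
    (hρ : ρ.PosSemidef) (hρtr : ρ.trace = 1)
    (L : ℕ) (hL : 1 ≤ L) (P : ℕ → Matrix (Fin d) (Fin d) ℂ)
    (hherm : ∀ i ∈ Finset.Icc 1 L, (P i).IsHermitian)
    (hidem : ∀ i ∈ Finset.Icc 1 L, P i * P i = P i) :
    1 - ((descM P L * ρ * ascM P L).trace).re
      ≤ 4 * ∑ i ∈ Finset.Icc 1 L, (((1 - P i) * ρ).trace).re := by
  classical
  obtain ⟨s, hsSA, -, hss⟩ := open scoped MatrixOrder in
    CFC.exists_sqrt_of_isSelfAdjoint_of_quasispectrumRestricts hρ.isHermitian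
      (QuasispectrumRestricts.nnreal_of_nonneg hρ.nonneg)
  have hsH : sᴴ = s := hsSA.star_eq
  have hρH : ρᴴ = ρ := hρ.1
  have sand : ∀ X : Matrix (Fin d) (Fin d) ℂ, (s * X * s).trace = (X * ρ).trace := by
    intro X
    rw [Matrix.trace_mul_cycle, hss, Matrix.trace_mul_comm]
  -- abbreviations as real-valued functions
  set g : ℕ → ℝ := fun t => (((descM P t)ᴴ * descM P t * ρ).trace).re with hg
  set f : ℕ → ℝ := fun t => (((1 - descM P t) * ρ).trace).re with hf
  set ε : ℕ → ℝ := fun i => (((1 - P i) * ρ).trace).re with hε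
  -- the key one-step inequality
  have step : ∀ t : ℕ, t + 1 ≤ L →
      f (t + 1) + g (t + 1) / 4 ≤ f t + g t / 4 + ε (t + 1) := by
    intro t ht
    have hmem : t + 1 ∈ Finset.Icc 1 L := by simp [Finset.mem_Icc]; omega
    set Q : Matrix (Fin d) (Fin d) ℂ := 1 - P (t + 1) with hQ
    have hPH : (P (t + 1))ᴴ = P (t + 1) := hherm _ hmem
    have hQH : Qᴴ = Q := by
      simp [hQ, Matrix.conjTranspose_sub, hPH]
    have hQQ : Q * Q = Q := by
      have h1 : Q * Q = 1 - P (t+1) - P (t+1) + P (t+1) * P (t+1) := by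
        rw [hQ]; noncomm_ring
      rw [h1, hidem _ hmem, hQ]; noncomm_ring
    have hQQ' : ∀ X : Matrix (Fin d) (Fin d) ℂ, Q * (Q * X) = Q * X := by
      intro X; rw [← Matrix.mul_assoc, hQQ]
    set Dp := descM P t with hDp
    have hDk : descM P (t + 1) = P (t + 1) * Dp := rfl
    set A := Q * s with hA
    set B := Q * Dp * s with hB
    have hAH : Aᴴ = s * Q := by rw [hA, Matrix.conjTranspose_mul, hsH, hQH]
    have hBH : Bᴴ = s * (Dpᴴ * Q) := by
      rw [hB, Matrix.conjTranspose_mul, Matrix.conjTranspose_mul, hsH, hQH]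
    -- trace of AᴴA
    have tA : ((Aᴴ * A).trace).re = ε (t + 1) := by
      have : Aᴴ * A = s * Q * s := by
        rw [hAH, hA]; simp only [Matrix.mul_assoc, hQQ']
      rw [this, sand, hε, hQ]
    -- trace of AᴴB
    have tAB : ((Aᴴ * B).trace).re = f (t + 1) - f t := by
      have h1 : Aᴴ * B = s * (Q * Dp) * s := by
        rw [hAH, hB]; simp only [Matrix.mul_assoc, hQQ']
      have h2 : Q * Dp = (1 - descM P (t+1)) - (1 - Dp) := by
        rw [hQ, hDk]; noncomm_ring
      rw [h1, sand, h2, Matrix.sub_mul, Matrix.trace_sub, Complex.sub_re, hf]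
    -- trace of BᴴB
    have tB : ((Bᴴ * B).trace).re = g t - g (t + 1) := by
      have h1 : Bᴴ * B = s * (Dpᴴ * (Q * Dp)) * s := by
        rw [hBH, hB]; simp only [Matrix.mul_assoc, hQQ']
      have h2 : Dpᴴ * (Q * Dp) = Dpᴴ * Dp - (descM P (t+1))ᴴ * descM P (t+1) := by
        have h3 : (descM P (t+1))ᴴ * descM P (t+1) = Dpᴴ * (P (t+1) * Dp) := by
          rw [hDk, Matrix.conjTranspose_mul, hPH, Matrix.mul_assoc, ← Matrix.mul_assoc (P (t+1)),
            hidem _ hmem]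
        rw [h3, hQ]; noncomm_ring
      rw [h1, sand, h2, Matrix.sub_mul, Matrix.trace_sub, Complex.sub_re, hg]
    have hcs := gao_cs4 A B
    rw [tA, tAB, tB] at hcs
    linarith
  -- induction: hybrid bound
  have main : ∀ t : ℕ, t ≤ L →
      f t + g t / 4 ≤ (∑ i ∈ Finset.Icc 1 t, ε i) + 1 / 4 := by
    intro t
    induction t with
    | zero =>
      intro _
      have hf0 : f 0 = 0 := by simp [hf, descM]
      have hg0 : g 0 = 1 := by simp [hg, descM, hρtr]
      simp [hf0, hg0]
    | succ t ih =>
      intro h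
      have h1 := step t h
      have h2 := ih (by omega)
      rw [Finset.sum_Icc_succ_top (by omega : 1 ≤ t + 1)]
      linarith
  -- second inequality : 1 - g L ≤ 2 * f L
  have second : 1 - g L ≤ 2 * f L := by
    set A0 : Matrix (Fin d) (Fin d) ℂ := 1 - descM P L with hA0
    have hdecomp : (1 : Matrix (Fin d) (Fin d) ℂ) - (descM P L)ᴴ * descM P L
        = A0 + A0ᴴ - A0ᴴ * A0 := by
      rw [hA0, Matrix.conjTranspose_sub, Matrix.conjTranspose_one]; noncomm_ring
    have e1 : (((1 : Matrix (Fin d) (Fin d) ℂ) - (descM P L)ᴴ * descM P L) * ρ).trace.re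
        = 1 - g L := by
      rw [Matrix.sub_mul, Matrix.trace_sub, Complex.sub_re, Matrix.one_mul, hρtr, hg]
      norm_num
    have e2 : ((A0ᴴ * ρ).trace).re = f L := by
      have h1 : A0ᴴ * ρ = (ρ * A0)ᴴ := by rw [Matrix.conjTranspose_mul, hρH]
      rw [h1, Matrix.trace_conjTranspose, Matrix.trace_mul_comm]
      simp [hf, hA0]
    have e3 : 0 ≤ ((A0ᴴ * A0 * ρ).trace).re := by
      have h1 : (A0 * s)ᴴ * (A0 * s) = s * (A0ᴴ * A0) * s := by
        rw [Matrix.conjTranspose_mul, hsH, Matrix.mul_assoc, ← Matrix.mul_assoc A0ᴴ,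
          ← Matrix.mul_assoc]
      have h2 := gao_re_nonneg (A0 * s)
      rwa [h1, sand] at h2
    have e4 := e1
    rw [hdecomp, Matrix.sub_mul, Matrix.add_mul, Matrix.trace_sub, Matrix.trace_add,
      Complex.sub_re, Complex.add_re] at e4
    have e5 : ((A0 * ρ).trace).re = f L := by simp [hf, hA0]
    linarith
  -- combine
  have hmL := main L le_rfl
  have hfin : 1 - g L ≤ 4 * ∑ i ∈ Finset.Icc 1 L, ε i := by linarith
  -- rewrite the goal in terms of g L
  have hasc : ∀ t : ℕ, t ≤ L → ascM P t = (descM P t)ᴴ := by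
    intro t
    induction t with
    | zero => intro _; simp [ascM, descM]
    | succ t ih =>
      intro h
      have hm : t + 1 ∈ Finset.Icc 1 L := by simp [Finset.mem_Icc]; omega
      show ascM P t * P (t + 1) = (P (t + 1) * descM P t)ᴴ
      rw [Matrix.conjTranspose_mul, ih (by omega), hherm _ hm]
  have hgoal : ((descM P L * ρ * ascM P L).trace).re = g L := by
    rw [hasc L le_rfl, Matrix.trace_mul_comm, ← Matrix.mul_assoc, hg]
  rw [hgoal]
  exact hfin
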